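/- Let n ≥ 1 and let A be an n × n matrix whose entries are formal power series with coefficients in O_L, and let f₀ ∈ O_L^n. Then there exists a unique vector f = (f_1, …, f_n) of formal power series over L such that the constant term of f is f₀ and f satisfies the linear differential system f' = A·f (entrywise formal derivative, with A viewed as a matrix over L[[t]]); moreover, this unique solution has divided-power integral coefficients: for every m ≥ 0 and every i, m! times the coefficient of t^m in f_i lies in O_L. (One-variable case of Lemma 2.2: flat sections of a connection defined over O_L exist and are unique in the divided-power algebra O_L⟨⟨t⟩⟩ for any integral initial condition.) -/

import Mathlib

open PowerSeries Finset

noncomputable def sol7 {L : Type*} [Field L] {n : ℕ} (A : Fin n → Fin n → PowerSeries L)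
    (f₀ : Fin n → L) : ℕ → Fin n → L
  | 0 => f₀
  | (m + 1) => fun i => ((m : L) + 1)⁻¹ *
      ∑ k ∈ Finset.range (m + 1), ∑ j, PowerSeries.coeff k (A i j) * sol7 A f₀ (m - k) j
  decreasing_by exact Nat.lt_succ_of_le (Nat.sub_le m k)

/-- one-variable case of Lemma 2.2: for an `n × n` matrix `A` of formal
power series with coefficients in `O_L` and any integral initial condition `f₀`, there
is a unique vector `f` of formal power series over `L` with constant term `f₀`
satisfying the linear system `f' = A · f`, and this unique solution has divided-power
integral coefficients: `m!` times the `m`-th coefficient of each `f i` lies in `O_L`. -/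
theorem statement7 (p : ℕ) [Fact p.Prime] (L : Type*) [NormedField L]
    [CompleteSpace L] [IsUltrametricDist L] [CharZero L]
    [Algebra ℚ_[p] L] [FiniteDimensional ℚ_[p] L]
    (hext : ∀ q : ℚ_[p], ‖algebraMap ℚ_[p] L q‖ = ‖q‖)
    (n : ℕ) (hn : 1 ≤ n)
    (A : Fin n → Fin n → PowerSeries L)
    (hA : ∀ i j m, ‖PowerSeries.coeff m (A i j)‖ ≤ 1)
    (f₀ : Fin n → L) (hf₀ : ∀ i, ‖f₀ i‖ ≤ 1) :
    ∃ f : Fin n → PowerSeries L,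
      ((∀ i, PowerSeries.constantCoeff (f i) = f₀ i) ∧
          ∀ i, PowerSeries.derivative L (f i) = ∑ j, A i j * f j) ∧
        (∀ i m, ‖(m.factorial : L) * PowerSeries.coeff m (f i)‖ ≤ 1) ∧
        ∀ g : Fin n → PowerSeries L,
          ((∀ i, PowerSeries.constantCoeff (g i) = f₀ i) ∧
              ∀ i, PowerSeries.derivative L (g i) = ∑ j, A i j * g j) → g = f := by
  have hnat : ∀ c : ℕ, ‖(c : L)‖ ≤ 1 := by
    intro c
    have h0 := hext (c : ℚ_[p])
    rw [map_natCast] at h0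
    rw [h0]
    have h1 : ‖((c : ℤ) : ℚ_[p])‖ ≤ 1 := Padic.norm_int_le_one _
    push_cast at h1
    exact h1
  have hne : ∀ m : ℕ, ((m : L) + 1) ≠ 0 := by
    intro m
    have : ((m + 1 : ℕ) : L) ≠ 0 := Nat.cast_ne_zero.mpr m.succ_ne_zero
    push_cast at this
    exact this
  set b := sol7 A f₀ with hb
  have hb0 : ∀ i, b 0 i = f₀ i := by intro i; simp [hb, sol7]
  have hrec : ∀ m i, b (m + 1) i = ((m : L) + 1)⁻¹ *
      ∑ k ∈ Finset.range (m + 1), ∑ j, coeff k (A i j) * b (m - k) j := by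
    intro m i; rw [hb]; rw [sol7]
  refine ⟨fun i => PowerSeries.mk (fun m => b m i), ⟨?_, ?_⟩, ?_, ?_⟩
  · intro i
    rw [← coeff_zero_eq_constantCoeff]
    simpa using hb0 i
  · intro i
    ext m
    rw [PowerSeries.coeff_derivative, coeff_mk, hrec m i, inv_mul_eq_div,
      div_mul_cancel₀ _ (hne m)]
    simp only [map_sum, PowerSeries.coeff_mul,
      Finset.Nat.sum_antidiagonal_eq_sum_range_succ_mk, coeff_mk]
    rw [Finset.sum_comm]
  · -- divided power bound
    intro i m
    induction m using Nat.strong_induction_on generalizing i with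
    | _ m ih =>
      simp only [coeff_mk] at ih ⊢
      match m with
      | 0 => simpa [hb0] using hf₀ i
      | (m + 1) =>
        rw [hrec m i]
        have hfac : (Nat.factorial (m + 1) : L) = ((m : L) + 1) * (Nat.factorial m : L) := by
          rw [Nat.factorial_succ]; push_cast; ring
        have heq : (Nat.factorial (m + 1) : L) *
            (((m : L) + 1)⁻¹ *
              ∑ k ∈ Finset.range (m + 1), ∑ j, coeff k (A i j) * b (m - k) j) =
            (Nat.factorial m : L) *
              ∑ k ∈ Finset.range (m + 1), ∑ j, coeff k (A i j) * b (m - k) j := by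
          rw [hfac, mul_comm ((m : L) + 1) ((Nat.factorial m : L)), mul_assoc,
            ← mul_assoc ((m : L) + 1), mul_inv_cancel₀ (hne m), one_mul]
        rw [heq, Finset.mul_sum]
        refine IsUltrametricDist.norm_sum_le_of_forall_le_of_nonneg zero_le_one
          fun k hk => ?_
        rw [Finset.mul_sum]
        refine IsUltrametricDist.norm_sum_le_of_forall_le_of_nonneg zero_le_one
          fun j _ => ?_
        have hk' : m - k ≤ m := Nat.sub_le m k
        obtain ⟨c, hc⟩ := Nat.factorial_dvd_factorial hk'
        have hsplit : (Nat.factorial m : L) * (coeff k (A i j) * b (m - k) j) =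
            coeff k (A i j) * (c : L) *
              ((Nat.factorial (m - k) : L) * b (m - k) j) := by
          rw [hc]; push_cast; ring
        rw [hsplit, norm_mul, norm_mul]
        calc ‖coeff k (A i j)‖ * ‖(c : L)‖ * ‖(Nat.factorial (m - k) : L) * b (m - k) j‖
            ≤ 1 * 1 * 1 :=
              mul_le_mul (mul_le_mul (hA i j k) (hnat c) (norm_nonneg _) zero_le_one)
                (ih (m - k) (Nat.lt_succ_of_le hk') j) (norm_nonneg _) (by norm_num)
          _ = 1 := by norm_num
  · -- uniqueness
    intro g ⟨hg0, hgd⟩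
    have key : ∀ m i, coeff m (g i) = b m i := by
      intro m
      induction m using Nat.strong_induction_on with
      | _ m ih =>
        match m with
        | 0 =>
          intro i
          rw [coeff_zero_eq_constantCoeff, hg0 i, hb0 i]
        | (m + 1) =>
          intro i
          have hd := congrArg (coeff m) (hgd i)
          rw [PowerSeries.coeff_derivative] at hd
          have h2 : coeff (m + 1) (g i) * ((m : L) + 1) =
              ∑ k ∈ Finset.range (m + 1), ∑ j, coeff k (A i j) * b (m - k) j := by
            rw [hd]
            simp only [map_sum, PowerSeries.coeff_mul,
              Finset.Nat.sum_antidiagonal_eq_sum_range_succ_mk]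
            rw [Finset.sum_comm]
            exact Finset.sum_congr rfl fun k hk => Finset.sum_congr rfl fun j _ => by
              rw [ih (m - k) (Nat.lt_succ_of_le (Nat.sub_le m k)) j]
          rw [hrec m i, eq_inv_mul_iff_mul_eq₀ (hne m), mul_comm]
          exact h2
    funext i
    ext m
    rw [key m i, coeff_mk]
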